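/- For a family F of subsets of [n] with no γ-flexible set, each level L_k = F ∩ C([n],k) satisfies |L_k|·(1-γ)k ≤ C(n,k-1) for k ≥ 1. -/

import Mathlib

open Finset

/-- The set of pivots of `A` with respect to the family `F`. -/
def pivots {n : ℕ} (F : Finset (Finset (Fin n))) (A : Finset (Fin n)) : Finset (Fin n) :=
  A.filter (fun i => ∃ j, j ∉ A ∧ insert j (A.erase i) ∈ F)

/-- `A` is `γ`-flexible with respect to `F` if it has at least `γ|A|` pivots. -/
def Flexible {n : ℕ} (F : Finset (Finset (Fin n))) (γ : ℝ) (A : Finset (Fin n)) : Prop :=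
  γ * A.card ≤ (pivots F A).card

/-- If `F` has no `γ`-flexible member, then each level `L_k = F ∩ C([n],k)` satisfies
`|L_k|·(1-γ)·k ≤ C(n,k-1)` for `k ≥ 1`. -/
theorem level_card_bound_of_no_flexible (n : ℕ) (F : Finset (Finset (Fin n))) (γ : ℝ)
    (hflex : ∀ A ∈ F, ¬ Flexible F γ A) (k : ℕ) (hk : 1 ≤ k) :
    ((F.filter (fun A => A.card = k)).card : ℝ) * ((1 - γ) * k) ≤ n.choose (k - 1) := by
  classical
  set L := F.filter (fun A => A.card = k) with hL
  set N : Finset (Fin n) → Finset (Fin n) := fun A => A \ pivots F A with hN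
  -- key injection
  have hpiv_sub : ∀ A, pivots F A ⊆ A := fun A => filter_subset _ _
  have hsum : ∑ A ∈ L, (N A).card ≤ n.choose (k - 1) := by
    have := Finset.card_le_card_of_injOn
      (f := fun p : Finset (Fin n) × Fin n => p.1.erase p.2)
      (s := (L ×ˢ (univ : Finset (Fin n))) |>.filter (fun p => p.2 ∈ N p.1))
      (t := (univ : Finset (Fin n)).powersetCard (k - 1)) ?_ ?_
    · calc ∑ A ∈ L, (N A).card
          = ((L ×ˢ (univ : Finset (Fin n))) |>.filter (fun p => p.2 ∈ N p.1)).card := by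
            rw [Finset.card_filter]
            rw [Finset.sum_product]
            congr 1; ext A
            simp [Finset.card_filter]
        _ ≤ ((univ : Finset (Fin n)).powersetCard (k - 1)).card := this
        _ = n.choose (k - 1) := by simp
    · rintro ⟨A, i⟩ hp
      simp only [Finset.mem_coe, Finset.mem_filter, Finset.mem_product] at hp
      obtain ⟨⟨hAL, -⟩, hi⟩ := hp
      have hiA : i ∈ A := (Finset.mem_sdiff.mp hi).1
      have hAk : A.card = k := (Finset.mem_filter.mp hAL).2
      simp only [Finset.mem_coe, Finset.mem_powersetCard]
      exact ⟨Finset.subset_univ _, by rw [Finset.card_erase_of_mem hiA, hAk]⟩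
    · rintro ⟨A, i⟩ hp ⟨A', i'⟩ hq heq
      simp only [Finset.mem_coe, Finset.mem_filter, Finset.mem_product] at hp hq
      obtain ⟨⟨hAL, -⟩, hi⟩ := hp
      obtain ⟨⟨hA'L, -⟩, hi'⟩ := hq
      have hiA : i ∈ A := (Finset.mem_sdiff.mp hi).1
      have hinp : i ∉ pivots F A := (Finset.mem_sdiff.mp hi).2
      have hi'A' : i' ∈ A' := (Finset.mem_sdiff.mp hi').1
      simp only at heq
      have hAA' : A = A' := by
        by_contra hne
        have hii' : i ≠ i' := by
          rintro rfl
          exact hne (by rw [← Finset.insert_erase hiA, heq, Finset.insert_erase hi'A'])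
        have hi'nA : i' ∉ A := by
          intro h
          have : i' ∈ A.erase i := Finset.mem_erase.mpr ⟨hii'.symm, h⟩
          rw [heq] at this
          exact (Finset.mem_erase.mp this).1 rfl
        have hA' : insert i' (A.erase i) ∈ F := by
          rw [heq, Finset.insert_erase hi'A']
          exact (Finset.mem_filter.mp hA'L).1
        exact hinp (Finset.mem_filter.mpr ⟨hiA, i', hi'nA, hA'⟩)
      subst hAA'
      have : i = i' := by
        by_contra hne
        have : i ∈ A.erase i' := Finset.mem_erase.mpr ⟨hne, hiA⟩
        rw [← heq] at this
        exact (Finset.mem_erase.mp this).1 rfl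
      simp [this]
  -- pointwise bound: (1-γ)*k ≤ (N A).card for A ∈ L
  have hpt : ∀ A ∈ L, (1 - γ) * k ≤ ((N A).card : ℝ) := by
    intro A hA
    have hAF : A ∈ F := (Finset.mem_filter.mp hA).1
    have hAk : A.card = k := (Finset.mem_filter.mp hA).2
    have hflexA := hflex A hAF
    rw [Flexible, not_le, hAk] at hflexA
    have hcard : (N A).card = k - (pivots F A).card := by
      rw [hN]; rw [Finset.card_sdiff_of_subset (hpiv_sub A), hAk]
    have hple : (pivots F A).card ≤ k := hAk ▸ Finset.card_le_card (hpiv_sub A)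
    have : ((N A).card : ℝ) = (k : ℝ) - (pivots F A).card := by
      rw [hcard, Nat.cast_sub hple]
    rw [this]
    nlinarith [hflexA]
  calc ((L.card : ℝ)) * ((1 - γ) * k) = ∑ _A ∈ L, (1 - γ) * k := by
        rw [Finset.sum_const, nsmul_eq_mul]
    _ ≤ ∑ A ∈ L, ((N A).card : ℝ) := Finset.sum_le_sum hpt
    _ = ((∑ A ∈ L, (N A).card : ℕ) : ℝ) := by push_cast; ring
    _ ≤ n.choose (k - 1) := by exact_mod_cast hsum
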